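/- Let a, b, a', b' be positive real numbers with a·b' > a'·b. For t : ℝ, define A t ↔ a·t > b·(1 − t) and B t ↔ a'·t > b'·(1 − t). Then 0 < b/(a+b) < b'/(a'+b') < 1, and for every real t, A t ≠ B t if and only if t ∈ Set.Ioc (b/(a+b)) (b'/(a'+b')); that is, the two decision rules disagree exactly on the nonempty half-open interval (b/(a+b), b'/(a'+b')] and agree everywhere else. -/
import Mathlib


/-- Bounded empathy: two agents with private weightings `(a, b)` and `(a', b')`
of the two axes, the first injury-leaning relative to the second (`a·b' > a'·b`),
license actions by threshold rules `A t ↔ a·t > b·(1−t)` and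
`B t ↔ a'·t > b'·(1−t)` on content `(t, 1−t)`. The two rules disagree exactly on
the nonempty half-open band `(b/(a+b), b'/(a'+b')]` and agree everywhere else. -/
theorem bounded_empathy_disagreement_band
    (a b a' b' : ℝ) (ha : 0 < a) (hb : 0 < b) (ha' : 0 < a') (hb' : 0 < b')
    (hlean : a * b' > a' * b) :
    (0 < b / (a + b) ∧ b / (a + b) < b' / (a' + b') ∧ b' / (a' + b') < 1) ∧
    ∀ t : ℝ,
      ((a * t > b * (1 - t)) ≠ (a' * t > b' * (1 - t)))
        ↔ t ∈ Set.Ioc (b / (a + b)) (b' / (a' + b')) := by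
  have hab : 0 < a + b := by linarith
  have hab' : 0 < a' + b' := by linarith
  have hA : ∀ t : ℝ, (a * t > b * (1 - t)) ↔ b / (a + b) < t := by
    intro t
    rw [div_lt_iff₀ hab]
    constructor <;> intro h <;> nlinarith
  have hB : ∀ t : ℝ, (a' * t > b' * (1 - t)) ↔ b' / (a' + b') < t := by
    intro t
    rw [div_lt_iff₀ hab']
    constructor <;> intro h <;> nlinarith
  have hlt : b / (a + b) < b' / (a' + b') := by
    rw [div_lt_div_iff₀ hab hab']
    nlinarith
  refine ⟨⟨by positivity, hlt, ?_⟩, ?_⟩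
  · rw [div_lt_one hab']; linarith
  · intro t
    rw [hA, hB] -- propositional rewrite? no, these are iffs on Props inside ≠
    simp only [ne_eq, eq_iff_iff, Set.mem_Ioc]
    constructor
    · intro h
      by_cases h1 : b / (a + b) < t
      · refine ⟨h1, ?_⟩
        by_contra h2
        push_neg at h2
        exact h ⟨fun _ => h2, fun _ => h1⟩
      · exact absurd ⟨fun h2 => absurd h2 h1,
          fun h2 => absurd (lt_trans hlt h2) h1⟩ h
    · rintro ⟨h1, h2⟩ hiff
      exact absurd (hiff.1 h1) (not_lt.2 h2)
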